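/- Let Ω ⊆ ℝ^m be open and convex, e : Ω → ℝ^{m×m} a C² symmetric-matrix field satisfying the Saint-Venant compatibility relations ∂²_{lj}e_{ik} + ∂²_{ki}e_{jl} − ∂²_{li}e_{jk} − ∂²_{jk}e_{il} = 0. Then there exists a C³ vector field V : Ω → ℝ^m with ½(∂_{x_i}V_j + ∂_{x_j}V_i) = e_{ij} on Ω for all i, j. -/

import Mathlib

noncomputable def pd {m : ℕ} (i : Fin m) (f : (Fin m → ℝ) → ℝ) (x : Fin m → ℝ) : ℝ :=
  fderiv ℝ f x (Pi.single i 1)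

open Set MeasureTheory intervalIntegral Metric Interval

section helpers
variable {m : ℕ}

lemma clm_apply_eq_sum (A : (Fin m → ℝ) →L[ℝ] ℝ) (v : Fin m → ℝ) :
    A v = ∑ l, v l * A (Pi.single l 1) := by
  have h : v = ∑ l, v l • (Pi.single l 1 : Fin m → ℝ) := by
    funext j
    simp [Finset.sum_apply, Pi.single_apply]
  conv_lhs => rw [h]
  rw [map_sum]
  simp [smul_eq_mul]

lemma diffAt_of_contDiffOn {n : WithTop ℕ∞} (hn : 1 ≤ n) {Ω : Set (Fin m → ℝ)}
    (hΩo : IsOpen Ω) {f : (Fin m → ℝ) → ℝ} (hf : ContDiffOn ℝ n f Ω) {x} (hx : x ∈ Ω) :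
    DifferentiableAt ℝ f x :=
  (hf.contDiffAt (hΩo.mem_nhds hx)).differentiableAt (ne_of_gt (lt_of_lt_of_le zero_lt_one hn))

lemma pd_sub (k : Fin m) {f g : (Fin m → ℝ) → ℝ} {x} (hf : DifferentiableAt ℝ f x)
    (hg : DifferentiableAt ℝ g x) :
    pd k (fun y => f y - g y) x = pd k f x - pd k g x := by
  simp [pd, fderiv_fun_sub hf hg]

lemma contDiffOn_pd {n : WithTop ℕ∞} {Ω : Set (Fin m → ℝ)} (hΩo : IsOpen Ω)
    {f : (Fin m → ℝ) → ℝ} (hf : ContDiffOn ℝ (n+1) f Ω) (j : Fin m) :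
    ContDiffOn ℝ n (pd j f) Ω :=
  (hf.fderiv_of_isOpen hΩo le_rfl).clm_apply contDiffOn_const

lemma pd_comm {Ω : Set (Fin m → ℝ)} (hΩo : IsOpen Ω) {f : (Fin m → ℝ) → ℝ}
    (hf : ContDiffOn ℝ 2 f Ω) {x} (hx : x ∈ Ω) (j k : Fin m) :
    pd j (pd k f) x = pd k (pd j f) x := by
  have hat : ContDiffAt ℝ 2 f x := hf.contDiffAt (hΩo.mem_nhds hx)
  have hsym := hat.isSymmSndFDerivAt (by simp)
  have hd : DifferentiableAt ℝ (fderiv ℝ f) x :=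
    (hat.fderiv_right (m := 1) (by norm_num)).differentiableAt (by norm_num)
  have h1 : ∀ v : Fin m → ℝ,
      fderiv ℝ (fun y => fderiv ℝ f y v) x = (fderiv ℝ (fderiv ℝ f) x).flip v := by
    intro v
    have := fderiv_clm_apply (c := fderiv ℝ f) (u := fun _ => v) hd (differentiableAt_const v)
    simpa using this
  show fderiv ℝ (fun y => fderiv ℝ f y (Pi.single k 1)) x (Pi.single j 1)
      = fderiv ℝ (fun y => fderiv ℝ f y (Pi.single j 1)) x (Pi.single k 1)
  rw [h1, h1]
  exact hsym _ _

end helpers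
set_option maxHeartbeats 1600000 in
lemma poincare {m : ℕ} {n : WithTop ℕ∞} (hn : 1 ≤ n) (hnt : n ≠ ⊤)
    {Ω : Set (Fin m → ℝ)} (hΩo : IsOpen Ω) (hΩc : Convex ℝ Ω)
    (f : Fin m → (Fin m → ℝ) → ℝ) (hf : ∀ l, ContDiffOn ℝ n (f l) Ω)
    (hsym : ∀ k l : Fin m, ∀ x ∈ Ω, pd k (f l) x = pd l (f k) x) :
    ∃ u : (Fin m → ℝ) → ℝ, ContDiffOn ℝ (n+1) u Ω ∧ ∀ l, ∀ x ∈ Ω, pd l u x = f l x := by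
  rcases Ω.eq_empty_or_nonempty with hE | ⟨x₀, hx₀⟩
  · exact ⟨0, by rw [hE]; exact fun x hx => absurd hx (Set.notMem_empty x), by rw [hE]; simp⟩
  classical
  set γ : (Fin m → ℝ) → ℝ → (Fin m → ℝ) := fun y t => x₀ + t • (y - x₀) with hγdef
  have hγmem : ∀ y ∈ Ω, ∀ t ∈ Icc (0:ℝ) 1, γ y t ∈ Ω := by
    intro y hy t ht
    have h := hΩc hx₀ hy (by linarith [ht.2] : (0:ℝ) ≤ 1 - t) ht.1 (by ring)
    convert h using 1
    simp only [γ]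
    module
  have hγcont : Continuous (fun p : (Fin m → ℝ) × ℝ => γ p.1 p.2) :=
    continuous_const.add (continuous_snd.smul (continuous_fst.sub continuous_const))
  set F : (Fin m → ℝ) → ℝ → ℝ := fun y t => ∑ l, f l (γ y t) * (y l - x₀ l) with hFdef
  set F' : (Fin m → ℝ) → ℝ → ((Fin m → ℝ) →L[ℝ] ℝ) := fun y t =>
    ∑ l, (f l (γ y t) • (ContinuousLinearMap.proj l : (Fin m → ℝ) →L[ℝ] ℝ)
      + (y l - x₀ l) • (t • fderiv ℝ (f l) (γ y t))) with hF'def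
  set u : (Fin m → ℝ) → ℝ := fun y => ∫ t in (0:ℝ)..1, F y t with hudef
  set L : (Fin m → ℝ) → ((Fin m → ℝ) →L[ℝ] ℝ) :=
    fun y => ∑ l, f l y • (ContinuousLinearMap.proj l : (Fin m → ℝ) →L[ℝ] ℝ) with hLdef
  have hf1 : ∀ l, ContDiffOn ℝ 1 (f l) Ω := fun l => (hf l).of_le hn
  have hfc : ∀ l, ContinuousOn (f l) Ω := fun l => (hf l).continuousOn
  have hfdc : ∀ l, ContinuousOn (fderiv ℝ (f l)) Ω :=
    fun l => (hf1 l).continuousOn_fderiv_of_isOpen hΩo le_rfl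
  have hdiffat : ∀ l, ∀ z ∈ Ω, DifferentiableAt ℝ (f l) z :=
    fun l z hz => diffAt_of_contDiffOn le_rfl hΩo (hf1 l) hz
  -- derivative of F in the space variable
  have hFderiv : ∀ t ∈ Icc (0:ℝ) 1, ∀ z, γ z t ∈ Ω →
      HasFDerivAt (fun y => F y t) (F' z t) z := by
    intro t _ z hz
    apply HasFDerivAt.fun_sum
    intro l _
    have hγd : HasFDerivAt (fun y => γ y t)
        (t • (ContinuousLinearMap.id ℝ (Fin m → ℝ))) z :=
      (((hasFDerivAt_id z).sub_const x₀).const_smul t).const_add x₀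
    have hcomp : HasFDerivAt (fun y => f l (γ y t)) (t • fderiv ℝ (f l) (γ z t)) z := by
      have h2 := (hdiffat l _ hz).hasFDerivAt.comp z hγd
      refine h2.congr_fderiv ?_
      ext v
      simp
    have hproj : HasFDerivAt (fun y : Fin m → ℝ => y l - x₀ l)
        (ContinuousLinearMap.proj l : (Fin m → ℝ) →L[ℝ] ℝ) z := by
      show HasFDerivAt
        (fun y : Fin m → ℝ => (ContinuousLinearMap.proj l : (Fin m → ℝ) →L[ℝ] ℝ) y - x₀ l) _ z
      exact ((ContinuousLinearMap.proj l : (Fin m → ℝ) →L[ℝ] ℝ).hasFDerivAt).sub_const (x₀ l)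
    exact hcomp.mul hproj
  have key : ∀ x ∈ Ω, HasFDerivAt u (L x) x := by
    intro x hx
    obtain ⟨ε, hε, hball⟩ : ∃ ε > 0, closedBall x ε ⊆ Ω := by
      rcases Metric.isOpen_iff.1 hΩo x hx with ⟨δ, hδ, hb⟩
      exact ⟨δ/2, by linarith, (closedBall_subset_ball (by linarith)).trans hb⟩
    have hmem : ∀ y ∈ closedBall x ε, ∀ t ∈ Icc (0:ℝ) 1, γ y t ∈ Ω :=
      fun y hy t ht => hγmem y (hball hy) t ht
    set S : Set ((Fin m → ℝ) × ℝ) := closedBall x ε ×ˢ Icc (0:ℝ) 1 with hSdef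
    have hScomp : IsCompact S := (isCompact_closedBall x ε).prod isCompact_Icc
    have hγS : MapsTo (fun p : (Fin m → ℝ) × ℝ => γ p.1 p.2) S Ω :=
      fun p hp => hmem p.1 hp.1 p.2 hp.2
    have hγcS : ContinuousOn (fun p : (Fin m → ℝ) × ℝ => γ p.1 p.2) S :=
      hγcont.continuousOn
    have hF'contS : ContinuousOn (fun p : (Fin m → ℝ) × ℝ => F' p.1 p.2) S := by
      apply continuousOn_finset_sum
      intro l _
      have h1 : ContinuousOn (fun p : (Fin m → ℝ) × ℝ => f l (γ p.1 p.2)) S :=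
        (hfc l).comp hγcS hγS
      have h2 : ContinuousOn (fun p : (Fin m → ℝ) × ℝ => fderiv ℝ (f l) (γ p.1 p.2)) S :=
        (hfdc l).comp hγcS hγS
      have h3 : ContinuousOn (fun p : (Fin m → ℝ) × ℝ => p.1 l - x₀ l) S :=
        (((continuous_apply l).comp continuous_fst).sub continuous_const).continuousOn
      have h4 : ContinuousOn (fun p : (Fin m → ℝ) × ℝ => p.2 • fderiv ℝ (f l) (γ p.1 p.2)) S :=
        continuous_snd.continuousOn.smul h2
      exact (h1.smul continuousOn_const).add (h3.smul h4)
    obtain ⟨C, hC⟩ := hScomp.exists_bound_of_continuousOn hF'contS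
    have hγtc : ∀ y, Continuous (fun t : ℝ => γ y t) := fun y =>
      continuous_const.add (continuous_id.smul continuous_const)
    have hIy : ∀ y ∈ closedBall x ε, ContinuousOn (F y) (Icc (0:ℝ) 1) := by
      intro y hy
      apply continuousOn_finset_sum
      intro l _
      exact ((hfc l).comp (hγtc y).continuousOn (fun t ht => hmem y hy t ht)).mul
        continuousOn_const
    have hF'I : ContinuousOn (fun t => F' x t) (Icc (0:ℝ) 1) := by
      apply continuousOn_finset_sum
      intro l _
      have hmt : MapsTo (fun t : ℝ => γ x t) (Icc (0:ℝ) 1) Ω :=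
        fun t ht => hγmem x hx t ht
      have h1 : ContinuousOn (fun t : ℝ => f l (γ x t)) (Icc (0:ℝ) 1) :=
        (hfc l).comp (hγtc x).continuousOn hmt
      have h2 : ContinuousOn (fun t : ℝ => fderiv ℝ (f l) (γ x t)) (Icc (0:ℝ) 1) :=
        (hfdc l).comp (hγtc x).continuousOn hmt
      exact (h1.smul continuousOn_const).add
        (continuousOn_const.fun_smul (continuousOn_id.fun_smul h2))
    have hsub : Ι (0:ℝ) 1 ⊆ Icc (0:ℝ) 1 := by
      rw [uIoc_of_le zero_le_one]; exact Ioc_subset_Icc_self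
    have hmeas : ∀ᶠ y in nhds x, AEStronglyMeasurable (F y) (volume.restrict (Ι (0:ℝ) 1)) := by
      filter_upwards [Metric.closedBall_mem_nhds x hε] with y hy
      exact ((hIy y hy).mono hsub).aestronglyMeasurable measurableSet_uIoc
    have hint : IntervalIntegrable (F x) volume 0 1 := by
      apply ContinuousOn.intervalIntegrable
      rw [uIcc_of_le zero_le_one]
      exact hIy x (mem_closedBall_self hε.le)
    have hF'meas : AEStronglyMeasurable (fun t => F' x t) (volume.restrict (Ι (0:ℝ) 1)) :=
      (hF'I.mono hsub).aestronglyMeasurable measurableSet_uIoc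
    have hbound : ∀ᵐ t ∂(volume : Measure ℝ), t ∈ Ι (0:ℝ) 1 →
        ∀ y ∈ ball x ε, ‖F' y t‖ ≤ C :=
      Filter.Eventually.of_forall fun t ht y hy =>
        hC (y, t) ⟨ball_subset_closedBall hy, hsub ht⟩
    have hdiff : ∀ᵐ t ∂(volume : Measure ℝ), t ∈ Ι (0:ℝ) 1 →
        ∀ y ∈ ball x ε, HasFDerivAt (fun y => F y t) (F' y t) y :=
      Filter.Eventually.of_forall fun t ht y hy =>
        hFderiv t (hsub ht) y (hmem y (ball_subset_closedBall hy) t (hsub ht))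
    have hudf : HasFDerivAt u (∫ t in (0:ℝ)..1, F' x t) x :=
      intervalIntegral.hasFDerivAt_integral_of_dominated_of_fderiv_le (ball_mem_nhds x hε) hmeas hint
        hF'meas hbound intervalIntegrable_const hdiff
    have hF'xint : IntervalIntegrable (fun t => F' x t) volume 0 1 := by
      apply ContinuousOn.intervalIntegrable
      rwa [uIcc_of_le zero_le_one]
    have hcomp : ∀ k : Fin m, (∫ t in (0:ℝ)..1, F' x t) (Pi.single k 1) = f k x := by
      intro k
      rw [ContinuousLinearMap.intervalIntegral_apply hF'xint]
      have hg : ∀ t ∈ uIcc (0:ℝ) 1,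
          HasDerivAt (fun s => s * f k (γ x s)) (F' x t (Pi.single k 1)) t := by
        intro t ht
        rw [uIcc_of_le zero_le_one] at ht
        have hzt : γ x t ∈ Ω := hγmem x hx t ht
        have hγt : HasDerivAt (fun s => γ x s) (x - x₀) t := by
          have h0 : HasDerivAt (fun s : ℝ => s • (x - x₀)) (x - x₀) t := by
            simpa using (hasDerivAt_id t).smul_const (x - x₀)
          simpa [γ] using h0.const_add x₀
        have hfk : HasDerivAt (fun s => f k (γ x s))
            (fderiv ℝ (f k) (γ x t) (x - x₀)) t :=
          (hdiffat k _ hzt).hasFDerivAt.comp_hasDerivAt t hγt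
        have hmul := (hasDerivAt_id t).mul hfk
        refine hmul.congr_deriv ?_
        have expand : fderiv ℝ (f k) (γ x t) (x - x₀)
            = ∑ l, (x l - x₀ l) * pd l (f k) (γ x t) := by
          rw [clm_apply_eq_sum]
          exact Finset.sum_congr rfl fun l _ => by simp [pd]
        have happ : F' x t (Pi.single k 1)
            = f k (γ x t) + t * ∑ l, (x l - x₀ l) * pd k (f l) (γ x t) := by
          simp only [F', ContinuousLinearMap.sum_apply, ContinuousLinearMap.add_apply,
            ContinuousLinearMap.smul_apply, ContinuousLinearMap.proj_apply,
            Pi.single_apply, smul_eq_mul, Finset.sum_add_distrib]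
          rw [Finset.mul_sum]
          congr 1
          · simp
          · exact Finset.sum_congr rfl fun l _ => by simp [pd]; ring
        rw [happ, expand]
        have hs : ∀ l, pd k (f l) (γ x t) = pd l (f k) (γ x t) :=
          fun l => hsym k l _ hzt
        simp only [hs, id_eq]
        ring
      have hgint : IntervalIntegrable (fun t => F' x t (Pi.single k 1)) volume 0 1 := by
        apply ContinuousOn.intervalIntegrable
        rw [uIcc_of_le zero_le_one]
        exact hF'I.clm_apply continuousOn_const
      rw [intervalIntegral.integral_eq_sub_of_hasDerivAt hg hgint]
      simp [γ]
    have hLx : (∫ t in (0:ℝ)..1, F' x t) = L x := by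
      refine ContinuousLinearMap.ext fun v => ?_
      rw [clm_apply_eq_sum _ v, clm_apply_eq_sum (L x) v]
      refine Finset.sum_congr rfl fun l _ => ?_
      rw [hcomp l]
      congr 1
      simp [L, ContinuousLinearMap.sum_apply, Pi.single_apply]
    rwa [hLx] at hudf
  refine ⟨u, ?_, fun l x hx => ?_⟩
  · rw [contDiffOn_succ_iff_fderiv_of_isOpen hΩo]
    refine ⟨fun x hx => (key x hx).differentiableAt.differentiableWithinAt,
      fun h => absurd h hnt, ?_⟩
    have hL : ContDiffOn ℝ n L Ω :=
      ContDiffOn.sum fun l _ => (hf l).smul contDiffOn_const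
    exact hL.congr fun x hx => (key x hx).fderiv
  · show fderiv ℝ u x (Pi.single l 1) = f l x
    rw [(key x hx).fderiv]
    simp [L, ContinuousLinearMap.sum_apply, Pi.single_apply]
theorem stmt18 (m : ℕ) (Ω : Set (Fin m → ℝ)) (hΩo : IsOpen Ω) (hΩc : Convex ℝ Ω)
    (e : Fin m → Fin m → (Fin m → ℝ) → ℝ)
    (he : ∀ i j, ContDiffOn ℝ 2 (e i j) Ω)
    (hesym : ∀ i j x, e i j x = e j i x)
    (hSV : ∀ i j k l : Fin m, ∀ x ∈ Ω,
      pd l (fun y => pd j (e i k) y) x + pd k (fun y => pd i (e j l) y) x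
        - pd l (fun y => pd i (e j k) y) x - pd j (fun y => pd k (e i l) y) x = 0) :
    ∃ V : (Fin m → ℝ) → (Fin m → ℝ), ContDiffOn ℝ 3 V Ω ∧
      ∀ i j : Fin m, ∀ x ∈ Ω,
        (pd i (fun y => V y j) x + pd j (fun y => V y i) x) / 2 = e i j x := by
  have he' : ∀ i j, ContDiffOn ℝ ((1:WithTop ℕ∞)+1) (e i j) Ω :=
    fun i j => (he i j).of_le (by norm_num)
  have hpde : ∀ i j k, ContDiffOn ℝ 1 (pd k (e i j)) Ω :=
    fun i j k => contDiffOn_pd hΩo (he' i j) k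
  have hpded : ∀ (i j k : Fin m), ∀ x ∈ Ω, DifferentiableAt ℝ (pd k (e i j)) x :=
    fun i j k x hx => diffAt_of_contDiffOn le_rfl hΩo (hpde i j k) hx
  have hed : ∀ (i j : Fin m), ∀ x ∈ Ω, DifferentiableAt ℝ (e i j) x :=
    fun i j x hx => diffAt_of_contDiffOn (by norm_num) hΩo (he i j) hx
  -- first Poincaré application
  have poin1 : ∀ i j : Fin m, ∃ p, ContDiffOn ℝ ((1:WithTop ℕ∞)+1) p Ω ∧
      ∀ l, ∀ x ∈ Ω, pd l p x = pd j (e i l) x - pd i (e j l) x := by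
    intro i j
    apply poincare le_rfl (by simp) hΩo hΩc
      (f := fun l y => pd j (e i l) y - pd i (e j l) y)
    · intro l
      exact (hpde i l j).sub (hpde j l i)
    · intro k l x hx
      rw [pd_sub k (hpded i l j x hx) (hpded j l i x hx),
        pd_sub l (hpded i k j x hx) (hpded j k i x hx)]
      have hs := pd_comm hΩo (he i l) hx k j
      linarith [hSV i j k l x hx, pd_comm hΩo (he i l) hx k j]
  choose p hp hdp using poin1
  have hpd' : ∀ (i j l : Fin m), ∀ x ∈ Ω, DifferentiableAt ℝ (p i j) x :=
    fun i j l x hx => diffAt_of_contDiffOn (by norm_num) hΩo (hp i j) hx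
  -- q
  set q : Fin m → Fin m → (Fin m → ℝ) → ℝ :=
    fun i j y => (2⁻¹ : ℝ) * (p i j y - p j i y) + e i j y with hqdef
  have hq : ∀ i j, ContDiffOn ℝ 2 (q i j) Ω := by
    intro i j
    exact ((contDiffOn_const.mul (((hp i j).of_le (by norm_num)).sub
      ((hp j i).of_le (by norm_num)))).add (he i j))
  have hdq : ∀ i j k, ∀ x ∈ Ω,
      pd k (q i j) x = pd j (e i k) x - pd i (e j k) x + pd k (e i j) x := by
    intro i j k x hx
    have d1 : DifferentiableAt ℝ (p i j) x := hpd' i j k x hx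
    have d2 : DifferentiableAt ℝ (p j i) x := hpd' j i k x hx
    have hD : HasFDerivAt (fun y => (2⁻¹ : ℝ) * (p i j y - p j i y) + e i j y)
        ((2⁻¹ : ℝ) • (fderiv ℝ (p i j) x - fderiv ℝ (p j i) x) + fderiv ℝ (e i j) x) x :=
      ((d1.hasFDerivAt.sub d2.hasFDerivAt).const_mul (2⁻¹ : ℝ)).add (hed i j x hx).hasFDerivAt
    have hstep : pd k (q i j) x
        = (2⁻¹ : ℝ) * (pd k (p i j) x - pd k (p j i) x) + pd k (e i j) x := by
      show fderiv ℝ (q i j) x (Pi.single k 1) = _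
      rw [show q i j = fun y => (2⁻¹ : ℝ) * (p i j y - p j i y) + e i j y from rfl, hD.fderiv]
      simp [pd]
    rw [hstep, hdp i j k x hx, hdp j i k x hx]
    ring
  -- second Poincaré application
  have poin2 : ∀ i : Fin m, ∃ u, ContDiffOn ℝ ((2:WithTop ℕ∞)+1) u Ω ∧
      ∀ l, ∀ x ∈ Ω, pd l u x = q i l x := by
    intro i
    apply poincare (by norm_num) (by simp) hΩo hΩc (f := fun l => q i l) (fun l => hq i l)
    intro k l x hx
    rw [hdq i l k x hx, hdq i k l x hx]
    rw [show e l k = e k l from funext fun y => hesym l k y]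
    ring
  choose u hu hdu using poin2
  refine ⟨fun y i => u i y, ?_, ?_⟩
  · rw [contDiffOn_pi]
    intro i
    exact (hu i).of_le (by norm_num)
  · intro i j x hx
    have h1 : pd i (fun y => u j y) x = q j i x := hdu j i x hx
    have h2 : pd j (fun y => u i y) x = q i j x := hdu i j x hx
    show (pd i (fun y => u j y) x + pd j (fun y => u i y) x) / 2 = e i j x
    rw [h1, h2]
    simp only [hqdef]
    rw [hesym j i x]
    ring
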